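/- Let f : ℝ^n → ℝ be continuously differentiable, let x_* be a critical point of f, and suppose f satisfies the Kurdyka–Łojasiewicz inequality at x_*: there are a neighborhood U of x_*, an exponent θ ∈ (0,1), and a constant C₁ > 0 such that |f(x) − f(x_*)|^θ ≤ C₁ ‖∇f(x)‖ for all x ∈ U. Let η > 0 and let {x_k} be a sequence with f(x_k) ≥ f(x_*) for all k, satisfying for each k the sufficient decrease f(x_{k+1}) ≤ f(x_k) − η α_k ‖∇f(x_k)‖² and the step-length identity ‖x_{k+1} − x_k‖ = 2 α_k ‖∇f(x_k)‖ / √(1 + α_k² ‖∇f(x_k)‖²) for some α_k > 0. If the open ball B(x_*, ρ) is contained in U where ρ > (2C₁/(η(1−θ))) |f(x_1) − f(x_*)|^{1−θ} + ‖x_1 − x_*‖ and x_1 ∈ B(x_*, ρ), then every iterate satisfies x_k ∈ B(x_*, ρ), and the sequence has finite length with Σ_{k=1}^∞ ‖x_{k+1} − x_k‖ ≤ (2C₁/(η(1−θ))) |f(x_1) − f(x_*)|^{1−θ}. -/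

import Mathlib

open Filter

lemma concave_rpow_aux {a b p : ℝ} (hb : 0 ≤ b) (hba : b ≤ a) (ha : 0 < a)
    (hp1 : 0 ≤ p) (hp2 : p ≤ 1) :
    p * (a - b) * a ^ (p - 1) ≤ a ^ p - b ^ p := by
  have hs : (-1 : ℝ) ≤ b / a - 1 := by
    have : 0 ≤ b / a := div_nonneg hb ha.le
    linarith
  have hbern := rpow_one_add_le_one_add_mul_self hs hp1 hp2
  rw [add_sub_cancel] at hbern
  have hb_eq : b ^ p = (b / a) ^ p * a ^ p := by
    rw [← Real.mul_rpow (div_nonneg hb ha.le) ha.le, div_mul_cancel₀ _ ha.ne']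
  have hap : (0 : ℝ) < a ^ p := Real.rpow_pos_of_pos ha p
  have h1 : b ^ p ≤ (1 + p * (b / a - 1)) * a ^ p := by
    rw [hb_eq]; exact mul_le_mul_of_nonneg_right hbern hap.le
  have h2 : a ^ (p - 1) = a ^ p / a := by
    rw [Real.rpow_sub ha, Real.rpow_one]
  have h3 : (a - b) / a = 1 - b / a := by field_simp
  rw [h2]
  have h4 : p * (a - b) * (a ^ p / a) = p * ((a - b) / a) * a ^ p := by ring
  rw [h4, h3]
  nlinarith [h1]

set_option maxHeartbeats 1000000 in
/-- under the Kurdyka–Łojasiewicz inequality at a critical point `x⋆`, a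
sequence satisfying the sufficient-decrease condition and the curvilinear step-length
identity, starting in a suitable ball around `x⋆`, stays in that ball and has finite
length, with `Σ ‖x_{k+1} − x_k‖ ≤ (2C₁/(η(1−θ))) |f(x₁) − f(x⋆)|^{1−θ}`. -/
theorem kl_finite_length
    {n : ℕ} (f : EuclideanSpace ℝ (Fin n) → ℝ)
    (hf : ContDiff ℝ 1 f)
    (xstar : EuclideanSpace ℝ (Fin n))
    (hcrit : gradient f xstar = 0)
    (U : Set (EuclideanSpace ℝ (Fin n))) (hU : U ∈ nhds xstar)
    (θ C₁ : ℝ) (hθ : θ ∈ Set.Ioo (0 : ℝ) 1) (hC₁ : 0 < C₁)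
    (hKL : ∀ y ∈ U, |f y - f xstar| ^ θ ≤ C₁ * ‖gradient f y‖)
    (η : ℝ) (hη : 0 < η)
    (x : ℕ → EuclideanSpace ℝ (Fin n)) (α : ℕ → ℝ)
    (hxf : ∀ k, f xstar ≤ f (x k))
    (hαpos : ∀ k, 0 < α k)
    (hdec : ∀ k, f (x (k + 1)) ≤ f (x k) - η * α k * ‖gradient f (x k)‖ ^ 2)
    (hstep : ∀ k, ‖x (k + 1) - x k‖
      = 2 * α k * ‖gradient f (x k)‖
          / Real.sqrt (1 + (α k) ^ 2 * ‖gradient f (x k)‖ ^ 2))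
    (ρ : ℝ)
    (hρ : 2 * C₁ / (η * (1 - θ)) * |f (x 0) - f xstar| ^ (1 - θ) + ‖x 0 - xstar‖ < ρ)
    (hball : Metric.ball xstar ρ ⊆ U)
    (hx0 : x 0 ∈ Metric.ball xstar ρ) :
    (∀ k, x k ∈ Metric.ball xstar ρ) ∧
    Summable (fun k => ‖x (k + 1) - x k‖) ∧
    ∑' k, ‖x (k + 1) - x k‖
      ≤ 2 * C₁ / (η * (1 - θ)) * |f (x 0) - f xstar| ^ (1 - θ) := by
  obtain ⟨hθ0, hθ1⟩ := hθ
  set p : ℝ := 1 - θ with hp_def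
  have hp : 0 < p := by simp [hp_def]; linarith
  have hp1 : p ≤ 1 := by simp [hp_def]; linarith
  set K : ℝ := 2 * C₁ / (η * (1 - θ)) with hK_def
  have hKpos : 0 < K := by
    apply div_pos (by linarith) (mul_pos hη (by linarith))
  set Δ : ℕ → ℝ := fun k => f (x k) - f xstar with hΔ_def
  have hΔnn : ∀ k, 0 ≤ Δ k := fun k => sub_nonneg.2 (hxf k)
  have hΔdec : ∀ k, Δ (k + 1) ≤ Δ k - η * α k * ‖gradient f (x k)‖ ^ 2 := by
    intro k; have := hdec k; simp only [hΔ_def]; linarith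
  have hΔ0eq : |f (x 0) - f xstar| = Δ 0 := abs_of_nonneg (hΔnn 0)
  have hΔeq : ∀ k, Δ k = f (x k) - f xstar := fun k => rfl
  clear_value p K Δ
  -- key per-step bound
  have key : ∀ k, x k ∈ U → ‖x (k + 1) - x k‖ ≤ K * (Δ k ^ p - Δ (k + 1) ^ p) := by
    intro k hmem
    set g : ℝ := ‖gradient f (x k)‖ with hg_def
    have hg0 : 0 ≤ g := norm_nonneg _
    have hKL' : Δ k ^ θ ≤ C₁ * g := by
      have h := hKL (x k) hmem
      rw [← hΔeq k] at h
      rwa [abs_of_nonneg (hΔnn k)] at h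
    have hd := hΔdec k
    rw [← hg_def] at hd
    have hα := hαpos k
    have hsq : 1 ≤ Real.sqrt (1 + α k ^ 2 * g ^ 2) := by
      calc (1:ℝ) = Real.sqrt 1 := by simp
        _ ≤ Real.sqrt (1 + α k ^ 2 * g ^ 2) := Real.sqrt_le_sqrt (by nlinarith)
    have hstep_le : ‖x (k + 1) - x k‖ ≤ 2 * α k * g := by
      rw [hstep k]
      exact div_le_self (by nlinarith) hsq
    clear_value g
    by_cases hΔ : Δ k = 0
    · have hg_zero : g = 0 := by
        have h1 := hΔnn (k + 1)
        rw [hΔ] at hd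
        have h2 : η * α k * g ^ 2 ≤ 0 := by linarith
        have h3 : g ^ 2 ≤ 0 := by
          by_contra hcon
          push_neg at hcon
          nlinarith [mul_pos (mul_pos hη hα) hcon]
        have h4 : g ^ 2 = 0 := le_antisymm h3 (sq_nonneg g)
        exact pow_eq_zero_iff two_ne_zero |>.mp h4
      have hΔ1 : Δ (k + 1) = 0 := by
        have h1 := hΔnn (k + 1)
        rw [hΔ, hg_zero] at hd
        nlinarith
      rw [hΔ, hΔ1, Real.zero_rpow hp.ne', sub_self, mul_zero]
      rw [hg_zero, mul_zero] at hstep_le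
      exact hstep_le
    · have hΔpos : 0 < Δ k := lt_of_le_of_ne (hΔnn k) (Ne.symm hΔ)
      have hg : 0 < g := by
        have h1 : 0 < Δ k ^ θ := Real.rpow_pos_of_pos hΔpos θ
        have h2 : 0 < C₁ * g := lt_of_lt_of_le h1 hKL'
        rcases mul_pos_iff.mp h2 with ⟨_, h3⟩ | ⟨h3, _⟩
        · exact h3
        · linarith
      have hba : Δ (k + 1) ≤ Δ k := by
        have h2 : 0 ≤ η * α k * g ^ 2 := mul_nonneg (mul_nonneg hη.le hα.le) (sq_nonneg g)
        linarith
      have hconc := concave_rpow_aux (hΔnn (k + 1)) hba hΔpos hp.le hp1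
      have hpe : p - 1 = -θ := by rw [hp_def]; ring
      have hpm1 : Δ k ^ (p - 1) = (Δ k ^ θ)⁻¹ := by
        rw [hpe, Real.rpow_neg hΔpos.le]
      rw [hpm1] at hconc
      have hinv : (C₁ * g)⁻¹ ≤ (Δ k ^ θ)⁻¹ :=
        inv_anti₀ (Real.rpow_pos_of_pos hΔpos θ) hKL'
      have hmono : p * (η * α k * g ^ 2) * (C₁ * g)⁻¹
          ≤ p * (Δ k - Δ (k + 1)) * (Δ k ^ θ)⁻¹ := by
        have h1 : η * α k * g ^ 2 ≤ Δ k - Δ (k + 1) := by linarith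
        have h2 : 0 ≤ η * α k * g ^ 2 := by positivity
        exact mul_le_mul (mul_le_mul_of_nonneg_left h1 hp.le) hinv
          (le_of_lt (inv_pos.2 (mul_pos hC₁ hg))) (mul_nonneg hp.le (by linarith))
      have htrans : p * (η * α k * g ^ 2) * (C₁ * g)⁻¹ ≤ Δ k ^ p - Δ (k + 1) ^ p :=
        le_trans hmono hconc
      have heq : K * (p * (η * α k * g ^ 2) * (C₁ * g)⁻¹) = 2 * α k * g := by
        rw [hK_def, hp_def]
        have h1 : (1 : ℝ) - θ ≠ 0 := by linarith
        field_simp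
      calc ‖x (k + 1) - x k‖ ≤ 2 * α k * g := hstep_le
        _ = K * (p * (η * α k * g ^ 2) * (C₁ * g)⁻¹) := heq.symm
        _ ≤ K * (Δ k ^ p - Δ (k + 1) ^ p) := by
            exact mul_le_mul_of_nonneg_left htrans hKpos.le
  -- main induction
  have main : ∀ N, x N ∈ Metric.ball xstar ρ ∧
      ∑ k ∈ Finset.range N, ‖x (k + 1) - x k‖ ≤ K * (Δ 0 ^ p - Δ N ^ p) := by
    intro N
    induction N with
    | zero => simpa using hx0
    | succ N ih =>
      obtain ⟨hmem, hsum⟩ := ih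
      have hkey := key N (hball hmem)
      have hsum' : ∑ k ∈ Finset.range (N + 1), ‖x (k + 1) - x k‖
          ≤ K * (Δ 0 ^ p - Δ (N + 1) ^ p) := by
        rw [Finset.sum_range_succ]
        calc _ ≤ K * (Δ 0 ^ p - Δ N ^ p) + K * (Δ N ^ p - Δ (N + 1) ^ p) :=
              add_le_add hsum hkey
          _ = K * (Δ 0 ^ p - Δ (N + 1) ^ p) := by ring
      refine ⟨?_, hsum'⟩
      have hΔNp : 0 ≤ Δ (N + 1) ^ p := Real.rpow_nonneg (hΔnn _) p
      have hbound : ∑ k ∈ Finset.range (N + 1), ‖x (k + 1) - x k‖ ≤ K * Δ 0 ^ p := by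
        nlinarith [hKpos]
      have htel : dist (x 0) (x (N + 1)) ≤ ∑ k ∈ Finset.range (N + 1), ‖x (k + 1) - x k‖ := by
        calc dist (x 0) (x (N + 1)) ≤ ∑ k ∈ Finset.range (N + 1), dist (x k) (x (k + 1)) :=
              dist_le_range_sum_dist x (N + 1)
          _ = ∑ k ∈ Finset.range (N + 1), ‖x (k + 1) - x k‖ := by
              refine Finset.sum_congr rfl fun k _ => ?_
              rw [dist_eq_norm, norm_sub_rev]
      rw [Metric.mem_ball]
      have htri : dist (x (N + 1)) xstar ≤ dist (x 0) (x (N + 1)) + ‖x 0 - xstar‖ := by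
        rw [← dist_eq_norm]
        calc dist (x (N + 1)) xstar ≤ dist (x (N + 1)) (x 0) + dist (x 0) xstar :=
              dist_triangle _ _ _
          _ = dist (x 0) (x (N + 1)) + dist (x 0) xstar := by rw [dist_comm (x (N + 1))]
      rw [hΔ0eq] at hρ
      linarith [le_trans htel hbound]
  -- conclude
  have hterm_nonneg : ∀ k, 0 ≤ ‖x (k + 1) - x k‖ := fun k => norm_nonneg _
  have hbdd : ∀ N, ∑ k ∈ Finset.range N, ‖x (k + 1) - x k‖ ≤ K * Δ 0 ^ p := by
    intro N
    have h1 := (main N).2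
    have hΔNp : 0 ≤ Δ N ^ p := Real.rpow_nonneg (hΔnn _) p
    nlinarith [hKpos]
  have hsummable : Summable fun k => ‖x (k + 1) - x k‖ :=
    summable_of_sum_range_le hterm_nonneg hbdd
  refine ⟨fun k => (main k).1, hsummable, ?_⟩
  rw [hΔ0eq]
  exact Summable.tsum_le_of_sum_range_le hsummable hbdd
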